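/- Let e, c, d ∈ X⁻ be orthonormal in H (⟨e|e⟩ = ⟨c|c⟩ = ⟨d|d⟩ = 1, ⟨e|c⟩ = ⟨e|d⟩ = ⟨c|d⟩ = 0). Define ι on 2×2 complex matrices by ι(m) := ((m₁₁ + m₂₂)/2)·e + ((m₁₁ − m₂₂)/(2i))·c + (m₁₂/i)·d. Then ι(1) = e, and for all symmetric matrices m, n, p ∈ M₂(ℂ) (mᵀ = m, nᵀ = n, pᵀ = p): (i) ι((m n* p + p n* m)/2) = {ι(m), ι(n), ι(p)}; (ii) ‖ι(m)‖_sp equals the C*-norm ‖m‖ of m; (iii) ⟨ι(m)|ι(m)⟩ = Re(tr(m* m))/2, i.e. ι is an isometry from the symmetric matrices with the normalized Hilbert–Schmidt norm into (H, ‖·‖₂). -/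

import Mathlib

open scoped InnerProductSpace

/-- The inner product `⟨x|y⟩` of the paper: linear in `x`, conjugate-linear in `y`
(Mathlib's `⟪·,·⟫_ℂ` is conjugate-linear in the first variable). -/
noncomputable def sip {H : Type*} [NormedAddCommGroup H] [InnerProductSpace ℂ H]
    (x y : H) : ℂ := ⟪y, x⟫_ℂ

/-- The spin factor triple product `{x,y,z} = ⟨x|y⟩z + ⟨z|y⟩x − ⟨x|Jz⟩Jy`
associated with a conjugation `J`. -/
noncomputable def tp {H : Type*} [NormedAddCommGroup H] [InnerProductSpace ℂ H]
    (J : H → H) (x y z : H) : H :=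
  sip x y • z + sip z y • x - sip x (J z) • J y

/-- The spin norm `‖x‖_sp = √(⟨x|x⟩ + √(⟨x|x⟩² − |⟨x|Jx⟩|²))`. -/
noncomputable def spNorm {H : Type*} [NormedAddCommGroup H] [InnerProductSpace ℂ H]
    (J : H → H) (x : H) : ℝ :=
  Real.sqrt ((sip x x).re + Real.sqrt ((sip x x).re ^ 2 - ‖sip x (J x)‖ ^ 2))

open scoped Matrix.Norms.L2Operator

namespace SpinAux

open Complex Matrix

lemma quad_eq (α β γ δ u v : ℂ) :
    normSq (α*u+β*v) + normSq (γ*u+δ*v)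
      = (normSq α + normSq γ) * normSq u + (normSq β + normSq δ) * normSq v
        + 2 * (((starRingEnd ℂ) α * β + (starRingEnd ℂ) γ * δ) * (starRingEnd ℂ) u * v).re := by
  simp only [normSq_apply, add_re, add_im, mul_re, mul_im, conj_re, conj_im]
  ring

lemma euc_norm_sq (x : EuclideanSpace ℂ (Fin 2)) : ‖x‖^2 = normSq (x 0) + normSq (x 1) := by
  rw [EuclideanSpace.norm_eq, Real.sq_sqrt (by positivity)]
  simp [Fin.sum_univ_two, Complex.sq_norm]

lemma clm_apply_norm_sq (m : Matrix (Fin 2) (Fin 2) ℂ) (x : EuclideanSpace ℂ (Fin 2)) :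
    ‖(Matrix.toEuclideanLin.trans LinearMap.toContinuousLinearMap m) x‖^2
      = normSq (m 0 0 * x 0 + m 0 1 * x 1) + normSq (m 1 0 * x 0 + m 1 1 * x 1) := by
  rw [euc_norm_sq]
  congr 1 <;>
  · congr 1
    simp [Matrix.toEuclideanLin_apply, Matrix.mulVec, dotProduct, Fin.sum_univ_two]

lemma key_lower (m : Matrix (Fin 2) (Fin 2) ℂ) (lam : ℝ) (hlam0 : 0 ≤ lam) (u v : ℂ)
    (hne : ¬(u = 0 ∧ v = 0))
    (hval : normSq (m 0 0 * u + m 0 1 * v) + normSq (m 1 0 * u + m 1 1 * v)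
      = lam * (normSq u + normSq v)) : Real.sqrt lam ≤ ‖m‖ := by
  set x : EuclideanSpace ℂ (Fin 2) := (WithLp.equiv 2 (Fin 2 → ℂ)).symm ![u, v] with hxdef
  have hxn : ‖x‖^2 = normSq u + normSq v := by rw [euc_norm_sq]; simp [hxdef]
  have hXpos : 0 < normSq u + normSq v := by
    rcases not_and_or.mp hne with h | h
    · have := normSq_pos.2 h; nlinarith [normSq_nonneg v]
    · have := normSq_pos.2 h; nlinarith [normSq_nonneg u]
  have hxpos : 0 < ‖x‖ := by
    have h0 : 0 < ‖x‖^2 := hxn ▸ hXpos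
    nlinarith [norm_nonneg x]
  have hmv := Matrix.l2_opNorm_mulVec m x
  have h1 : ‖(EuclideanSpace.equiv (Fin 2) ℂ).symm (m *ᵥ x)‖^2
      = lam * (normSq u + normSq v) := by
    rw [euc_norm_sq]
    have e0 : ((EuclideanSpace.equiv (Fin 2) ℂ).symm (m *ᵥ x)) 0 = m 0 0 * u + m 0 1 * v := by
      simp [hxdef, Matrix.mulVec, dotProduct, Fin.sum_univ_two]
    have e1 : ((EuclideanSpace.equiv (Fin 2) ℂ).symm (m *ᵥ x)) 1 = m 1 0 * u + m 1 1 * v := by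
      simp [hxdef, Matrix.mulVec, dotProduct, Fin.sum_univ_two]
    rw [e0, e1, hval]
  have h3 : Real.sqrt lam * ‖x‖ = ‖(EuclideanSpace.equiv (Fin 2) ℂ).symm (m *ᵥ x)‖ := by
    have h4 : (Real.sqrt lam * ‖x‖)^2 = ‖(EuclideanSpace.equiv (Fin 2) ℂ).symm (m *ᵥ x)‖^2 := by
      rw [mul_pow, Real.sq_sqrt hlam0, hxn, h1]
    have h5 : 0 ≤ Real.sqrt lam * ‖x‖ := by positivity
    nlinarith [norm_nonneg ((EuclideanSpace.equiv (Fin 2) ℂ).symm (m *ᵥ x))]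
  have h6 : Real.sqrt lam * ‖x‖ ≤ ‖m‖ * ‖x‖ := h3 ▸ hmv
  exact le_of_mul_le_mul_right h6 hxpos

lemma opnorm_le (m : Matrix (Fin 2) (Fin 2) ℂ) (lam : ℝ) (hlam0 : 0 ≤ lam)
    (hb : ∀ u v : ℂ, normSq (m 0 0 * u + m 0 1 * v) + normSq (m 1 0 * u + m 1 1 * v)
      ≤ lam * (normSq u + normSq v)) : ‖m‖ ≤ Real.sqrt lam := by
  rw [Matrix.l2_opNorm_def]
  apply ContinuousLinearMap.opNorm_le_bound _ (Real.sqrt_nonneg _)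
  intro x
  rw [show Real.sqrt lam * ‖x‖ = Real.sqrt (lam * ‖x‖^2) by
    rw [Real.sqrt_mul hlam0, Real.sqrt_sq (norm_nonneg x)]]
  apply Real.le_sqrt_of_sq_le
  rw [clm_apply_norm_sq, euc_norm_sq]
  exact hb _ _

lemma lagrange (α β γ δ : ℂ) :
    normSq (α*δ - β*γ)
      = (normSq α + normSq γ) * (normSq β + normSq δ)
        - normSq ((starRingEnd ℂ) α * β + (starRingEnd ℂ) γ * δ) := by
  simp only [normSq_apply, add_re, add_im, sub_re, sub_im, mul_re, mul_im, conj_re, conj_im]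
  ring

lemma quad_le (α β γ δ u v : ℂ) (lam : ℝ)
    (hp : normSq α + normSq γ ≤ lam) (hr : normSq β + normSq δ ≤ lam)
    (hq : (lam - (normSq α + normSq γ)) * (lam - (normSq β + normSq δ))
        = normSq ((starRingEnd ℂ) α * β + (starRingEnd ℂ) γ * δ)) :
    normSq (α*u+β*v) + normSq (γ*u+δ*v) ≤ lam * (normSq u + normSq v) := by
  rw [quad_eq]
  set p := normSq α + normSq γ
  set r := normSq β + normSq δ
  set q := (starRingEnd ℂ) α * β + (starRingEnd ℂ) γ * δ
  set X := normSq u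
  set Y := normSq v
  set R := (q * (starRingEnd ℂ) u * v).re with hR
  have hX : 0 ≤ X := normSq_nonneg u
  have hY : 0 ≤ Y := normSq_nonneg v
  have hR2 : R^2 ≤ normSq q * X * Y := by
    have h1 : R^2 ≤ normSq (q * (starRingEnd ℂ) u * v) := by
      rw [normSq_apply]; nlinarith [sq_nonneg (q * (starRingEnd ℂ) u * v).im]
    simpa [normSq_mul, normSq_conj, mul_assoc] using h1
  have hAB : normSq q * X * Y = ((lam-p)*X) * ((lam-r)*Y) := by rw [← hq]; ring
  nlinarith [sq_nonneg ((lam - p)*X - (lam - r)*Y), hAB, hR2,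
    mul_nonneg (sub_nonneg.2 hp) hX, mul_nonneg (sub_nonneg.2 hr) hY]

lemma lam_spec (p r Q : ℝ) (hQ : 0 ≤ Q) :
    p ≤ (p + r + Real.sqrt ((p-r)^2 + 4*Q))/2 ∧
    r ≤ (p + r + Real.sqrt ((p-r)^2 + 4*Q))/2 ∧
    ((p + r + Real.sqrt ((p-r)^2+4*Q))/2 - p) * ((p + r + Real.sqrt ((p-r)^2+4*Q))/2 - r) = Q := by
  have hs0 : 0 ≤ (p-r)^2 + 4*Q := by positivity
  have hs2 := Real.sq_sqrt hs0
  have habs : |p - r| ≤ Real.sqrt ((p-r)^2+4*Q) := by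
    rw [← Real.sqrt_sq_eq_abs]; exact Real.sqrt_le_sqrt (by linarith)
  have h1 := le_abs_self (p - r); have h2 := neg_abs_le (p - r)
  refine ⟨by linarith, by linarith, by linear_combination hs2 / 4⟩

lemma trace_re (m : Matrix (Fin 2) (Fin 2) ℂ) :
    (m.conjTranspose * m).trace.re
      = (normSq (m 0 0) + normSq (m 1 0)) + (normSq (m 0 1) + normSq (m 1 1)) := by
  simp only [Matrix.trace_fin_two, Matrix.mul_apply, Matrix.conjTranspose_apply,
    Fin.sum_univ_two, add_re, mul_re, conj_re, conj_im, RCLike.star_def, normSq_apply]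
  ring

lemma disc_nonneg (m : Matrix (Fin 2) (Fin 2) ℂ) :
    0 ≤ (m.conjTranspose * m).trace.re ^ 2 - 4 * ‖m.det‖ ^ 2 := by
  have hk : ‖m.det‖ ^ 2
      = (normSq (m 0 0) + normSq (m 1 0)) * (normSq (m 0 1) + normSq (m 1 1))
        - normSq ((starRingEnd ℂ) (m 0 0) * m 0 1 + (starRingEnd ℂ) (m 1 0) * m 1 1) := by
    rw [Complex.sq_norm, Matrix.det_fin_two]
    exact lagrange (m 0 0) (m 0 1) (m 1 0) (m 1 1)
  rw [trace_re, hk]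
  nlinarith [sq_nonneg (normSq (m 0 0) + normSq (m 1 0) - (normSq (m 0 1) + normSq (m 1 1))),
    normSq_nonneg ((starRingEnd ℂ) (m 0 0) * m 0 1 + (starRingEnd ℂ) (m 1 0) * m 1 1)]

lemma opnorm_formula (m : Matrix (Fin 2) (Fin 2) ℂ) :
    ‖m‖ = Real.sqrt (((m.conjTranspose * m).trace.re
        + Real.sqrt ((m.conjTranspose * m).trace.re ^ 2 - 4 * ‖m.det‖ ^ 2)) / 2) := by
  set p := normSq (m 0 0) + normSq (m 1 0) with hpdef
  set r := normSq (m 0 1) + normSq (m 1 1) with hrdef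
  set q := (starRingEnd ℂ) (m 0 0) * m 0 1 + (starRingEnd ℂ) (m 1 0) * m 1 1 with hqdef
  have hp0 : 0 ≤ p := add_nonneg (normSq_nonneg _) (normSq_nonneg _)
  have ht : (m.conjTranspose * m).trace.re = p + r := trace_re m
  have hk : ‖m.det‖ ^ 2 = p * r - normSq q := by
    rw [Complex.sq_norm, Matrix.det_fin_two, hpdef, hrdef, hqdef]
    exact lagrange (m 0 0) (m 0 1) (m 1 0) (m 1 1)
  have hts : (m.conjTranspose * m).trace.re ^ 2 - 4 * ‖m.det‖ ^ 2
      = (p - r)^2 + 4 * normSq q := by rw [ht, hk]; ring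
  obtain ⟨hple, hrle, hABQ⟩ := lam_spec p r (normSq q) (normSq_nonneg q)
  have hgeq : ((m.conjTranspose * m).trace.re
      + Real.sqrt ((m.conjTranspose * m).trace.re ^ 2 - 4 * ‖m.det‖ ^ 2)) / 2
      = (p + r + Real.sqrt ((p-r)^2 + 4*normSq q))/2 := by rw [hts, ht]
  rw [hgeq]
  set lam := (p + r + Real.sqrt ((p-r)^2 + 4*normSq q))/2 with hlam
  have hlam0 : 0 ≤ lam := le_trans hp0 hple
  apply le_antisymm
  · exact opnorm_le m lam hlam0
      (fun u v => quad_le (m 0 0) (m 0 1) (m 1 0) (m 1 1) u v lam hple hrle hABQ)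
  · by_cases hq : normSq q = 0
    · rcases mul_eq_zero.mp (hq ▸ hABQ) with h | h
      · refine key_lower m lam hlam0 1 0 (by simp) ?_
        have hlamp : lam = p := by linarith
        simp only [mul_one, mul_zero, add_zero, normSq_one, normSq_zero]
        rw [hlamp, hpdef]
      · refine key_lower m lam hlam0 0 1 (by simp) ?_
        have hlamr : lam = r := by linarith
        simp only [mul_one, mul_zero, zero_add, add_zero, normSq_one, normSq_zero]
        rw [hlamr, hrdef]
    · refine key_lower m lam hlam0 q ((lam - p : ℝ) : ℂ)
        (fun h => hq (by rw [h.1]; simp)) ?_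
      rw [quad_eq, Complex.mul_conj, ← Complex.ofReal_mul, Complex.ofReal_re,
        Complex.normSq_ofReal]
      linear_combination (p - lam) * hABQ

end SpinAux

open Complex in
set_option maxHeartbeats 2000000 in
theorem stmt12 {H : Type*} [NormedAddCommGroup H] [InnerProductSpace ℂ H]
    (J : H → H)
    (hJadd : ∀ x y : H, J (x + y) = J x + J y)
    (hJsmul : ∀ (c : ℂ) (x : H), J (c • x) = (starRingEnd ℂ) c • J x)
    (hJiso : ∀ x : H, ‖J x‖ = ‖x‖)
    (hJinv : ∀ x : H, J (J x) = x)
    (e c d : H) (he : J e = e) (hc : J c = c) (hd : J d = d)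
    (hee : sip e e = 1) (hcc : sip c c = 1) (hdd : sip d d = 1)
    (hec : sip e c = 0) (hed : sip e d = 0) (hcd : sip c d = 0)
    (ι : Matrix (Fin 2) (Fin 2) ℂ → H)
    (hι : ∀ m : Matrix (Fin 2) (Fin 2) ℂ,
      ι m = ((m 0 0 + m 1 1) / 2) • e + ((m 0 0 - m 1 1) / (2 * Complex.I)) • c
        + (m 0 1 / Complex.I) • d) :
    ι 1 = e ∧
    (∀ m n p : Matrix (Fin 2) (Fin 2) ℂ, m.transpose = m → n.transpose = n →
      p.transpose = p →
      ι ((2 : ℂ)⁻¹ • (m * n.conjTranspose * p + p * n.conjTranspose * m))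
        = tp J (ι m) (ι n) (ι p)) ∧
    (∀ m : Matrix (Fin 2) (Fin 2) ℂ, m.transpose = m → spNorm J (ι m) = ‖m‖) ∧
    (∀ m : Matrix (Fin 2) (Fin 2) ℂ, m.transpose = m →
      sip (ι m) (ι m) = (((m.conjTranspose * m).trace.re / 2 : ℝ) : ℂ)) := by
  have iee : ⟪e, e⟫_ℂ = 1 := hee
  have icc : ⟪c, c⟫_ℂ = 1 := hcc
  have idd : ⟪d, d⟫_ℂ = 1 := hdd
  have ice : ⟪c, e⟫_ℂ = 0 := hec
  have ide : ⟪d, e⟫_ℂ = 0 := hed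
  have idc : ⟪d, c⟫_ℂ = 0 := hcd
  have iec : ⟪e, c⟫_ℂ = 0 := by rw [← inner_conj_symm, ice, map_zero]
  have ied : ⟪e, d⟫_ℂ = 0 := by rw [← inner_conj_symm, ide, map_zero]
  have icd : ⟪c, d⟫_ℂ = 0 := by rw [← inner_conj_symm, idc, map_zero]
  have hsip : ∀ a b f a' b' f' : ℂ, sip (a•e+b•c+f•d) (a'•e+b'•c+f'•d)
      = a * (starRingEnd ℂ) a' + b * (starRingEnd ℂ) b' + f * (starRingEnd ℂ) f' := by
    intro a b f a' b' f'
    simp only [sip, inner_add_left, inner_add_right, inner_smul_left, inner_smul_right,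
      iee, icc, idd, ice, ide, idc, iec, ied, icd, mul_zero, mul_one, add_zero, zero_add,
      mul_comm]
    ring
  have hJ3 : ∀ a b f : ℂ, J (a•e + b•c + f•d)
      = (starRingEnd ℂ) a • e + (starRingEnd ℂ) b • c + (starRingEnd ℂ) f • d := by
    intro a b f
    rw [hJadd, hJadd, hJsmul, hJsmul, hJsmul, he, hc, hd]
  -- part (iv) as a reusable fact
  have hiv : ∀ m : Matrix (Fin 2) (Fin 2) ℂ, m.transpose = m →
      sip (ι m) (ι m) = (((m.conjTranspose * m).trace.re / 2 : ℝ) : ℂ) := by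
    intro m hm
    have hm10 : m 1 0 = m 0 1 := by
      have := congrFun (congrFun hm 0) 1
      simpa [Matrix.transpose_apply] using this
    rw [hι, hsip, SpinAux.trace_re, hm10]
    rw [Complex.mul_conj, Complex.mul_conj, Complex.mul_conj]
    rw [← Complex.ofReal_add, ← Complex.ofReal_add]
    rw [Complex.ofReal_inj]
    simp only [normSq_div, normSq_mul, normSq_I, normSq_ofNat]
    simp only [normSq_apply, add_re, add_im, sub_re, sub_im]
    norm_num
    ring
  refine ⟨?_, ?_, ?_, hiv⟩
  · rw [hι]
    norm_num [Matrix.one_apply]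
  · intro m n p hm hn hp
    have hm10 : m 1 0 = m 0 1 := by
      have := congrFun (congrFun hm 0) 1; simpa [Matrix.transpose_apply] using this
    have hn10 : n 1 0 = n 0 1 := by
      have := congrFun (congrFun hn 0) 1; simpa [Matrix.transpose_apply] using this
    have hp10 : p 1 0 = p 0 1 := by
      have := congrFun (congrFun hp 0) 1; simpa [Matrix.transpose_apply] using this
    rw [hι, hι m, hι n, hι p]
    unfold tp
    rw [hJ3, hJ3]
    simp only [hsip]
    simp only [Matrix.smul_apply, Matrix.add_apply, Matrix.mul_apply,
      Matrix.conjTranspose_apply, Fin.sum_univ_two, smul_eq_mul, RCLike.star_def,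
      hm10, hn10, hp10]
    simp only [map_add, map_sub, map_mul, map_div₀, map_neg, Complex.conj_I, map_ofNat,
      Complex.conj_conj]
    match_scalars <;>
    · simp only [div_eq_mul_inv, mul_inv, inv_neg, Complex.inv_I, neg_neg]
      ring_nf
      simp only [Complex.I_sq, Complex.I_pow_four,
        show Complex.I ^ 3 = -Complex.I from by rw [pow_succ, Complex.I_sq, neg_one_mul]]
      ring
  · intro m hm
    have hm10 : m 1 0 = m 0 1 := by
      have := congrFun (congrFun hm 0) 1; simpa [Matrix.transpose_apply] using this
    have hre : (sip (ι m) (ι m)).re = (m.conjTranspose * m).trace.re / 2 := by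
      rw [hiv m hm, Complex.ofReal_re]
    have habs : ‖sip (ι m) (J (ι m))‖ = ‖m.det‖ := by
      have hJι : sip (ι m) (J (ι m)) = m.det := by
        rw [hι, hJ3, hsip]
        rw [Matrix.det_fin_two, hm10]
        simp only [Complex.conj_conj]
        field_simp
        simp only [Complex.ext_iff, add_re, add_im, sub_re, sub_im, mul_re, mul_im,
          neg_re, neg_im, I_re, I_im, ofReal_re, ofReal_im, one_re, one_im,
          re_ofNat, im_ofNat, pow_succ, pow_zero, one_mul, conj_re, conj_im]
        constructor <;> ring
      rw [hJι]
    rw [spNorm, hre, habs, SpinAux.opnorm_formula m]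
    have hd4 : ((m.conjTranspose * m).trace.re / 2) ^ 2 - ‖m.det‖ ^ 2
        = ((m.conjTranspose * m).trace.re ^ 2 - 4 * ‖m.det‖ ^ 2) / 4 := by ring
    rw [hd4]
    rw [show ((m.conjTranspose * m).trace.re ^ 2 - 4 * ‖m.det‖ ^ 2) / 4
      = ((m.conjTranspose * m).trace.re ^ 2 - 4 * ‖m.det‖ ^ 2) / 2 ^ 2 by ring]
    rw [Real.sqrt_div (SpinAux.disc_nonneg m),
      Real.sqrt_sq (by norm_num : (0:ℝ) ≤ 2)]
    congr 1
    ring
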